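/- Let (u*, λ*) be an eigenpair with u* > 0 entrywise, ‖u*‖ = 1, and 𝒜(u*)u* = λ* u*. Then there exist constants c₂ > 0 and ρ > 0 such that for every u ∈ ℝ^n with u > 0 entrywise, ‖u‖ = 1, and ‖u − u*‖ < ρ, one has |λ(u) − λ*| ≤ c₂·‖u − u*‖. -/

import Mathlib

open Matrix Finset

noncomputable def enorm {n : ℕ} (u : Fin n → ℝ) : ℝ := Real.sqrt (∑ i, u i ^ 2)

def IsZMatrix {n : ℕ} (B : Matrix (Fin n) (Fin n) ℝ) : Prop :=
  ∀ i j, i ≠ j → B i j ≤ 0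

def IsIrreducibleMat {n : ℕ} (B : Matrix (Fin n) (Fin n) ℝ) : Prop :=
  ¬ ∃ S : Finset (Fin n), S.Nonempty ∧ S ≠ Finset.univ ∧
    ∀ i ∈ S, ∀ j ∉ S, B i j = 0

def IsNonsingularM {n : ℕ} (B : Matrix (Fin n) (Fin n) ℝ) : Prop :=
  IsZMatrix B ∧ IsUnit B ∧ ∀ i j, 0 ≤ B⁻¹ i j

noncomputable def calA {n : ℕ} (A : Matrix (Fin n) (Fin n) ℝ) (Γ : ℝ) (a : Fin n → ℝ)
    (u : Fin n → ℝ) : Matrix (Fin n) (Fin n) ℝ :=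
  A + Γ • Matrix.diagonal (fun i => 1 - 1 / (a i + u i ^ 2))

noncomputable def rvec {n : ℕ} (A : Matrix (Fin n) (Fin n) ℝ) (Γ : ℝ) (a : Fin n → ℝ)
    (u : Fin n → ℝ) (lam : ℝ) : Fin n → ℝ :=
  calA A Γ a u *ᵥ u - lam • u

noncomputable def Jmat {n : ℕ} (A : Matrix (Fin n) (Fin n) ℝ) (Γ : ℝ) (a : Fin n → ℝ)
    (u : Fin n → ℝ) (lam : ℝ) : Matrix (Fin n) (Fin n) ℝ :=
  A + (Γ - lam) • (1 : Matrix (Fin n) (Fin n) ℝ)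
    - Γ • Matrix.diagonal (fun i => (a i - u i ^ 2) / (a i + u i ^ 2) ^ 2)

noncomputable def lamOf {n : ℕ} [NeZero n] (A : Matrix (Fin n) (Fin n) ℝ) (Γ : ℝ)
    (a : Fin n → ℝ) (u : Fin n → ℝ) : ℝ :=
  ⨅ i, (calA A Γ a u *ᵥ u) i / u i

def NewtonSystem {n : ℕ} (A : Matrix (Fin n) (Fin n) ℝ) (Γ : ℝ) (a : Fin n → ℝ)
    (u : Fin n → ℝ) (lam : ℝ) (Δ : Fin n → ℝ) (δ : ℝ) : Prop :=
  Jmat A Γ a u lam *ᵥ Δ - δ • u = -rvec A Γ a u lam ∧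
  -(u ⬝ᵥ Δ) = -(1/2 * (u ⬝ᵥ u - 1))

theorem stmt_18 {n : ℕ} [NeZero n] (A : Matrix (Fin n) (Fin n) ℝ) (a : Fin n → ℝ) (Γ : ℝ)
    (ha : ∀ i, 0 < a i) (hΓ : 0 < Γ)
    (hA : IsNonsingularM A) (hAirr : IsIrreducibleMat A)
    (ustar : Fin n → ℝ) (lamstar : ℝ)
    (hustar : ∀ i, 0 < ustar i) (hnormstar : _root_.enorm ustar = 1)
    (heig : calA A Γ a ustar *ᵥ ustar = lamstar • ustar) :
    ∃ (c₂ : ℝ) (ρ : ℝ), 0 < c₂ ∧ 0 < ρ ∧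
      ∀ u : Fin n → ℝ, (∀ i, 0 < u i) → _root_.enorm u = 1 → _root_.enorm (u - ustar) < ρ →
        |lamOf A Γ a u - lamstar| ≤ c₂ * _root_.enorm (u - ustar) := by
  classical
  set f : Fin n → (Fin n → ℝ) → ℝ := fun i u => (calA A Γ a u *ᵥ u) i / u i with hf
  have hfstar : ∀ i, f i ustar = lamstar := by
    intro i
    have h1 : (calA A Γ a ustar *ᵥ ustar) i = lamstar * ustar i := by
      rw [heig]; simp
    show (calA A Γ a ustar *ᵥ ustar) i / ustar i = lamstar
    rw [h1, mul_div_assoc, div_self (ne_of_gt (hustar i)), mul_one]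
  have hproj : ∀ j : Fin n, ContDiff ℝ 1 (fun u : Fin n → ℝ => u j) := fun j =>
    (ContinuousLinearMap.proj (R := ℝ) (φ := fun _ : Fin n => ℝ) j).contDiff
  have hcd : ∀ i, ContDiffAt ℝ 1 (f i) ustar := by
    intro i
    have hexpr : f i
        = fun u => ((∑ j, A i j * u j) + Γ * ((1 - 1/(a i + u i ^ 2)) * u i)) / u i := by
      funext u
      simp [hf, calA, Matrix.mulVec, dotProduct, Matrix.diagonal, add_mul,
        Finset.sum_add_distrib, mul_ite, ite_mul, mul_assoc]
    rw [hexpr]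
    have hden : a i + ustar i ^ 2 ≠ 0 := by nlinarith [ha i, sq_nonneg (ustar i)]
    apply ContDiffAt.div _ (hproj i).contDiffAt (ne_of_gt (hustar i))
    apply ContDiffAt.add
    · exact (ContDiff.sum fun j _ => contDiff_const.mul (hproj j)).contDiffAt
    · apply ContDiffAt.mul contDiffAt_const
      apply ContDiffAt.mul _ (hproj i).contDiffAt
      apply ContDiffAt.sub contDiffAt_const
      exact ContDiffAt.div contDiffAt_const
        (contDiffAt_const.add ((hproj i).contDiffAt.pow 2)) hden
  choose K t ht hlip using fun i => (hcd i).exists_lipschitzOnWith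
  choose ε hε hball using fun i => Metric.mem_nhds_iff.mp (ht i)
  set ρ : ℝ := Finset.univ.inf' ⟨default, mem_univ _⟩ ε with hρ
  have hρpos : 0 < ρ := by
    rw [hρ]; refine (Finset.lt_inf'_iff _).mpr ?_
    exact fun i _ => hε i
  have hρle : ∀ i, ρ ≤ ε i := fun i => Finset.inf'_le _ (mem_univ i)
  set c₂ : ℝ := 1 + ∑ i, (K i : ℝ) with hc₂
  have hc₂pos : 0 < c₂ := by
    have : 0 ≤ ∑ i, (K i : ℝ) := Finset.sum_nonneg fun i _ => (K i).coe_nonneg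
    linarith
  have hKle : ∀ i, (K i : ℝ) ≤ c₂ := by
    intro i
    have := Finset.single_le_sum (f := fun i => (K i : ℝ))
      (fun j _ => (K j).coe_nonneg) (mem_univ i)
    linarith
  refine ⟨c₂, ρ, hc₂pos, hρpos, ?_⟩
  intro u hu hnorm hclose
  set d := _root_.enorm (u - ustar) with hd
  have hd0 : 0 ≤ d := Real.sqrt_nonneg _
  have hdist : dist u ustar ≤ d := by
    rw [dist_pi_le_iff hd0]
    intro i
    rw [Real.dist_eq, ← Real.sqrt_sq_eq_abs]
    apply Real.sqrt_le_sqrt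
    have := Finset.single_le_sum (f := fun j => (u - ustar) j ^ 2)
      (fun j _ => sq_nonneg _) (mem_univ i)
    simpa using this
  have hbnd : ∀ i, |f i u - lamstar| ≤ c₂ * d := by
    intro i
    have huin : u ∈ t i := hball i (by
      rw [Metric.mem_ball]
      exact lt_of_le_of_lt hdist (lt_of_lt_of_le hclose (hρle i)))
    have hsin : ustar ∈ t i := hball i (by
      rw [Metric.mem_ball, dist_self]; exact hε i)
    have := (hlip i).dist_le_mul u huin ustar hsin
    rw [Real.dist_eq, hfstar i] at this
    calc |f i u - lamstar| ≤ (K i : ℝ) * dist u ustar := this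
      _ ≤ c₂ * d := mul_le_mul (hKle i) hdist dist_nonneg (le_of_lt hc₂pos)
  have hbdd : BddBelow (Set.range fun i => f i u) := Finite.bddBelow_range _
  have hub : lamOf A Γ a u ≤ lamstar + c₂ * d := by
    have h1 : lamOf A Γ a u ≤ f default u := ciInf_le hbdd default
    have h2 := abs_le.mp (hbnd default)
    linarith [h2.2]
  have hlb : lamstar - c₂ * d ≤ lamOf A Γ a u := by
    apply le_ciInf
    intro i
    show lamstar - c₂ * d ≤ f i u
    have h2 := abs_le.mp (hbnd i)
    linarith [h2.1]
  rw [abs_le]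
  constructor <;> linarith
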